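/- For every subgroup T = {0, α, β, α+β} ⊆ (ℤ/2ℤ)^g of order at most 4, the polynomial p̃_{T,χ}(v) := P_T(…, v_{σ0}, …) − P_T(…, v_{σ1}, …) in the 2^{g+1} variables v_τ, τ ∈ (ℤ/2ℤ)^{g+1}, transforms under the Heisenberg group H_{g+1} by the character χ: it is invariant under all sign changes v_τ ↦ (−1)^{τ·a} v_τ, and under the translation v_τ ↦ v_{τ+b} it is multiplied by (−1)^{b_{g+1}}, for all a, b ∈ (ℤ/2ℤ)^{g+1}. -/

import Mathlib

open MvPolynomial

/-- The group `(ℤ/2ℤ)^g`. -/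
abbrev Vg (g : ℕ) : Type := Fin g → ZMod 2

instance (g : ℕ) : Finite (AddSubgroup (Vg g)) :=
  Finite.of_injective (fun T => (T : Set (Vg g))) SetLike.coe_injective

/-- The subgroups of `(ℤ/2ℤ)^g` of order at most four; these index the variables `p_T`. -/
abbrev SmallSubgroup (g : ℕ) : Type := {T : AddSubgroup (Vg g) // Nat.card T ≤ 4}

noncomputable instance (g : ℕ) : Fintype (SmallSubgroup g) := Fintype.ofFinite _

/-- For a subgroup `T = {0, α, β, α+β}` of order at most `4`, the Heisenberg-invariant
quartic `P_T := ∑_ρ x_ρ x_{ρ+α} x_{ρ+β} x_{ρ+α+β}`, written intrinsically as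
`∑_ρ (∏_{t ∈ T} x_{ρ+t})^{4/|T|}`. -/
noncomputable def PT {g : ℕ} (T : AddSubgroup (Vg g)) : MvPolynomial (Vg g) ℂ :=
  letI := Classical.decPred (fun t : Vg g => t ∈ T)
  ∑ ρ : Vg g,
    (∏ t ∈ Finset.univ.filter (fun t : Vg g => t ∈ T), X (ρ + t)) ^ (4 / Nat.card T)

/-- `p̃_{T,χ}(v) := P_T(…, v_{σ0}, …) − P_T(…, v_{σ1}, …)`, a quartic in the `2^{g+1}`
variables `v_τ`, `τ ∈ (ℤ/2ℤ)^{g+1}`. -/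
noncomputable def ptilde {g : ℕ} (T : AddSubgroup (Vg g)) : MvPolynomial (Vg (g + 1)) ℂ :=
  rename (fun σ : Vg g => Fin.snoc σ (0 : ZMod 2)) (PT T)
    - rename (fun σ : Vg g => Fin.snoc σ (1 : ZMod 2)) (PT T)

/-! ### Helper lemmas -/

lemma two_torsion {g : ℕ} (x : Vg g) : x + x = 0 := by
  funext i
  have h : ∀ y : ZMod 2, y + y = 0 := by decide
  exact h (x i)

lemma chi_sq (x : ZMod 2) : ((-1 : ℂ) ^ x.val) ^ 2 = 1 := by
  fin_cases x <;> norm_num [show ZMod.val (1 : ZMod 2) = 1 from rfl, ZMod.val]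

lemma chi_four (u p q : ZMod 2) :
    ((-1 : ℂ) ^ u.val) * ((-1) ^ (u + p).val) * ((-1) ^ (u + q).val)
      * ((-1) ^ (u + (p + q)).val) = 1 := by
  have hz : ∀ x : ZMod 2, x = 0 ∨ x = 1 := by decide
  rcases hz u with rfl | rfl <;> rcases hz p with rfl | rfl <;> rcases hz q with rfl | rfl <;>
    norm_num [show ZMod.val (1 : ZMod 2) = 1 from rfl,
      show ZMod.val (2 : ZMod 2) = 0 from rfl, show ZMod.val (3 : ZMod 2) = 1 from rfl]

lemma snoc_add {g : ℕ} (x y : Vg g) (u v : ZMod 2) :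
    (Fin.snoc (x + y) (u + v) : Vg (g + 1)) = Fin.snoc x u + Fin.snoc y v := by
  funext i
  refine Fin.lastCases ?_ (fun j => ?_) i <;> simp

lemma dot_add {g : ℕ} (a x y : Vg g) :
    (∑ i, (x + y) i * a i) = (∑ i, x i * a i) + (∑ i, y i * a i) := by
  rw [← Finset.sum_add_distrib]
  exact Finset.sum_congr rfl fun i _ => by simp [add_mul]

lemma filter_card {g : ℕ} (T : AddSubgroup (Vg g))
    [inst : DecidablePred (fun t : Vg g => t ∈ T)] :
    (Finset.univ.filter (fun t : Vg g => t ∈ T)).card = Nat.card T := by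
  rw [Nat.card_eq_fintype_card, Fintype.card_subtype]

lemma card_cases {g : ℕ} (T : AddSubgroup (Vg g)) (hT : Nat.card T ≤ 4) :
    Nat.card T = 1 ∨ Nat.card T = 2 ∨ Nat.card T = 4 := by
  have hdvd : Nat.card T ∣ Nat.card (Vg g) := AddSubgroup.card_addSubgroup_dvd_card T
  have hcard : Nat.card (Vg g) = 2 ^ g := by simp [Nat.card_eq_fintype_card]
  rw [hcard] at hdvd
  obtain ⟨k, -, hn⟩ := (Nat.dvd_prime_pow Nat.prime_two).mp hdvd
  rw [hn] at hT ⊢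
  have hk : k ≤ 2 := by
    by_contra hk
    have : 2 ^ 3 ≤ 2 ^ k := Nat.pow_le_pow_right (by norm_num) (by omega)
    omega
  interval_cases k <;> norm_num

lemma S_card4 {g : ℕ} (T : AddSubgroup (Vg g))
    [inst : DecidablePred (fun t : Vg g => t ∈ T)]
    (h : (Finset.univ.filter (fun t : Vg g => t ∈ T)).card = 4) :
    ∃ α β : Vg g, α ≠ 0 ∧ β ≠ 0 ∧ β ≠ α ∧ α + β ≠ 0 ∧ α + β ≠ α ∧ α + β ≠ β ∧
      Finset.univ.filter (fun t : Vg g => t ∈ T) = {0, α, β, α + β} := by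
  classical
  set S := Finset.univ.filter (fun t : Vg g => t ∈ T) with hS
  have hmem : ∀ x : Vg g, x ∈ S ↔ x ∈ T := by intro x; simp [hS]
  have h0 : (0 : Vg g) ∈ S := (hmem 0).mpr (zero_mem T)
  have h1 : 0 < (S.erase 0).card := by
    rw [Finset.card_erase_of_mem h0, h]; norm_num
  obtain ⟨α, hα⟩ := Finset.card_pos.mp h1
  have hα0 : α ≠ 0 := (Finset.mem_erase.mp hα).1
  have hαS : α ∈ S := (Finset.mem_erase.mp hα).2
  have h2 : 0 < ((S.erase 0).erase α).card := by
    rw [Finset.card_erase_of_mem hα, Finset.card_erase_of_mem h0, h]; norm_num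
  obtain ⟨β, hβ⟩ := Finset.card_pos.mp h2
  have hβα : β ≠ α := (Finset.mem_erase.mp hβ).1
  have hβ0 : β ≠ 0 := (Finset.mem_erase.mp (Finset.mem_erase.mp hβ).2).1
  have hβS : β ∈ S := (Finset.mem_erase.mp (Finset.mem_erase.mp hβ).2).2
  have hαβS : α + β ∈ S := (hmem _).mpr (add_mem ((hmem _).mp hαS) ((hmem _).mp hβS))
  have hab0 : α + β ≠ 0 := fun hc =>
    hβα (add_left_cancel (show α + β = α + α by rw [hc, two_torsion]))
  have haba : α + β ≠ α := fun hc =>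
    hβ0 (add_left_cancel (show α + β = α + 0 by rw [hc, add_zero]))
  have habb : α + β ≠ β := fun hc =>
    hα0 (add_right_cancel (show α + β = 0 + β by rw [hc, zero_add]))
  refine ⟨α, β, hα0, hβ0, hβα, hab0, haba, habb, ?_⟩
  have hsub : ({0, α, β, α + β} : Finset (Vg g)) ⊆ S := by
    intro x hx
    simp only [Finset.mem_insert, Finset.mem_singleton] at hx
    rcases hx with rfl | rfl | rfl | rfl <;> assumption
  have hcard : S.card ≤ ({0, α, β, α + β} : Finset (Vg g)).card := by
    rw [h,
      Finset.card_insert_of_notMem (by simp [Ne.symm hα0, Ne.symm hβ0, Ne.symm hab0]),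
      Finset.card_insert_of_notMem (by simp [Ne.symm hβα, Ne.symm haba]),
      Finset.card_insert_of_notMem (by simp [Ne.symm habb]), Finset.card_singleton]
  exact (Finset.eq_of_subset_of_card_le hsub hcard).symm

lemma PT_translate {g : ℕ} (T : AddSubgroup (Vg g)) (c : Vg g) :
    rename (fun σ : Vg g => σ + c) (PT T) = PT T := by
  simp only [PT, map_sum, map_pow, map_prod, rename_X]
  refine Fintype.sum_equiv (Equiv.addRight c) _ _ (fun ρ => ?_)
  congr 1
  refine Finset.prod_congr rfl fun t _ => ?_
  congr 1
  show ρ + t + c = (ρ + c) + t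
  abel

/-- Sign-change equivariance of the rename of `PT`. -/
lemma aeval_PT {g : ℕ} (T : AddSubgroup (Vg g)) (hT : Nat.card T ≤ 4)
    (a : Vg (g + 1)) (ε : ZMod 2) :
    aeval (fun σ : Vg g =>
        ((-1 : ℂ) ^ (∑ i, (Fin.snoc σ ε : Vg (g + 1)) i * a i : ZMod 2).val) •
          (X (Fin.snoc σ ε : Vg (g + 1)) : MvPolynomial (Vg (g + 1)) ℂ)) (PT T)
      = rename (fun σ : Vg g => Fin.snoc σ ε) (PT T) := by
  simp only [PT, map_sum, map_pow, map_prod, aeval_X, rename_X]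
  refine Finset.sum_congr rfl fun ρ _ => ?_
  rcases card_cases T hT with hn | hn | hn
  · -- |T| = 1
    obtain ⟨x, hx⟩ := Finset.card_eq_one.mp
      ((filter_card (inst := Classical.decPred _) T).trans hn)
    rw [hx, hn, Nat.div_one, Finset.prod_singleton, Finset.prod_singleton, smul_pow,
      show (4:ℕ) = 2 * 2 from rfl, pow_mul, chi_sq, one_pow, one_smul]
  · -- |T| = 2
    obtain ⟨x, y, hxy, hset⟩ := Finset.card_eq_two.mp
      ((filter_card (inst := Classical.decPred _) T).trans hn)
    rw [hset, hn, show (4/2:ℕ) = 2 from rfl, Finset.prod_pair hxy, Finset.prod_pair hxy,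
      smul_mul_smul_comm, smul_pow, mul_pow, chi_sq, chi_sq, one_mul, one_smul]
  · -- |T| = 4
    obtain ⟨α, β, hα0, hβ0, hβα, hab0, haba, habb, hset⟩ := S_card4
      (inst := Classical.decPred _) T ((filter_card (inst := Classical.decPred _) T).trans hn)
    rw [hset, hn, show (4/4:ℕ) = 1 from rfl]
    have m1 : (0 : Vg g) ∉ ({α, β, α + β} : Finset (Vg g)) := by
      simp [Ne.symm hα0, Ne.symm hβ0, Ne.symm hab0]
    have m2 : α ∉ ({β, α + β} : Finset (Vg g)) := by
      simp [Ne.symm hβα, Ne.symm haba]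
    have m3 : β ∉ ({α + β} : Finset (Vg g)) := by simp [Ne.symm habb]
    rw [Finset.prod_insert m1, Finset.prod_insert m2, Finset.prod_insert m3,
      Finset.prod_singleton, Finset.prod_insert m1, Finset.prod_insert m2,
      Finset.prod_insert m3, Finset.prod_singleton]
    rw [smul_mul_smul_comm, smul_mul_smul_comm, smul_mul_smul_comm, smul_pow, pow_one, pow_one]
    have e0 : ρ + 0 = ρ := add_zero ρ
    have eα : (Fin.snoc (ρ + α) ε : Vg (g+1)) = Fin.snoc ρ ε + Fin.snoc α 0 := by
      rw [← snoc_add, add_zero]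
    have eβ : (Fin.snoc (ρ + β) ε : Vg (g+1)) = Fin.snoc ρ ε + Fin.snoc β 0 := by
      rw [← snoc_add, add_zero]
    have eαβ : (Fin.snoc (ρ + (α + β)) ε : Vg (g+1))
        = Fin.snoc ρ ε + (Fin.snoc α 0 + Fin.snoc β 0) := by
      rw [← snoc_add, ← snoc_add, add_zero, add_zero]
    rw [e0, eα, eβ, eαβ, dot_add, dot_add, dot_add, dot_add]
    rw [← mul_assoc, ← mul_assoc, chi_four, one_smul]

/-- `p̃_{T,χ}` transforms under the Heisenberg group `H_{g+1}` by the character `χ`: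
it is invariant under all sign changes `v_τ ↦ (−1)^{τ·a} v_τ`, and the translation
`v_τ ↦ v_{τ+b}` multiplies it by `(−1)^{b_{g+1}}`. -/
theorem ptilde_heisenberg_character (g : ℕ) (T : AddSubgroup (Vg g))
    (hT : Nat.card T ≤ 4) :
    (∀ a : Vg (g + 1),
      aeval (fun τ : Vg (g + 1) =>
          ((-1 : ℂ) ^ (∑ i, τ i * a i : ZMod 2).val) •
            (X τ : MvPolynomial (Vg (g + 1)) ℂ)) (ptilde T) = ptilde T) ∧
    (∀ b : Vg (g + 1),
      rename (fun τ : Vg (g + 1) => τ + b) (ptilde T)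
        = ((-1 : ℂ) ^ (b (Fin.last g)).val) • ptilde T) := by
  constructor
  · intro a
    simp only [ptilde, map_sub]
    rw [aeval_rename, aeval_rename]
    exact congrArg₂ (· - ·) (aeval_PT T hT a 0) (aeval_PT T hT a 1)
  · intro b
    have hcomp : ∀ ε : ZMod 2,
        ((fun τ : Vg (g+1) => τ + b) ∘ (fun σ : Vg g => Fin.snoc σ ε))
          = (fun σ : Vg g => (Fin.snoc σ (ε + b (Fin.last g)) : Vg (g+1)))
              ∘ (fun σ : Vg g => σ + fun j => b (Fin.castSucc j)) := by
      intro ε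
      funext σ
      show (Fin.snoc σ ε : Vg (g+1)) + b = _
      funext i
      refine Fin.lastCases ?_ (fun j => ?_) i <;> simp
    simp only [ptilde, map_sub, rename_rename]
    rw [hcomp 0, hcomp 1, ← rename_rename, ← rename_rename, PT_translate]
    have hz : ∀ x : ZMod 2, x = 0 ∨ x = 1 := by decide
    rcases hz (b (Fin.last g)) with hb | hb <;> rw [hb]
    · rw [add_zero, add_zero, show ((0:ZMod 2)).val = 0 from rfl, pow_zero, one_smul]
    · rw [show ((0:ZMod 2) + 1) = 1 from by decide, show ((1:ZMod 2) + 1) = 0 from by decide,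
        show ((1:ZMod 2)).val = 1 from rfl, pow_one, neg_one_smul]
      ring
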